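/- Let (A_1, A_2, ...) be a sequence of alphabets each of size 7. For every N there exist at least 4^N steady words w = w_1 w_2 ... w_N with w_i ∈ A_i for all i. -/

import Mathlib

/-- A word is square-free if it contains no nonempty factor of the form `X ++ X`. -/
def SquareFree {α : Type*} (W : List α) : Prop :=
  ∀ X : List α, X ≠ [] → ¬ (X ++ X) <:+: W

/-- A square-free word is steady if deleting any single letter leaves it square-free. -/
def Steady {α : Type*} (W : List α) : Prop :=
  SquareFree W ∧ ∀ i < W.length, SquareFree (W.eraseIdx i)

open List

namespace StmtAux

variable {α : Type*}

theorem sf_infix {W V : List α} (h : SquareFree W) (hv : V <:+: W) : SquareFree V :=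
  fun X hX hXX => h X hX (hXX.trans hv)

theorem sf_nil : SquareFree ([] : List α) := by
  intro X hX hXX
  have := hXX.length_le
  simp only [length_append, length_nil, Nat.le_zero, Nat.add_eq_zero,
    length_eq_zero_iff] at this
  exact hX this.1

theorem steady_take {W : List α} (h : Steady W) (m : ℕ) : Steady (W.take m) := by
  constructor
  · exact sf_infix h.1 (W.take_prefix m).isInfix
  · intro i hi
    have hi' : i < W.length := lt_of_lt_of_le hi (by simp)
    have hpre : (W.take m).eraseIdx i <+: W.eraseIdx i := by
      rw [eraseIdx_eq_take_drop_succ, eraseIdx_eq_take_drop_succ]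
      have h1 : (W.take m).take i = W.take i := by
        rw [take_take]; congr 1; simp at hi; omega
      rw [h1, drop_take]
      exact ⟨W.drop (i+1) |>.drop (m - (i+1)) , by simp⟩
    exact sf_infix (h.2 i hi') hpre.isInfix

theorem sf_snoc {v : List α} {a : α} (hv : SquareFree v) (h : ¬ SquareFree (v ++ [a])) :
    ∃ p Y, v = p ++ Y ++ a :: Y := by
  rw [SquareFree] at h
  push_neg at h
  obtain ⟨X, hX, s, t, hst⟩ := h
  rcases t.eq_nil_or_concat with rfl | ⟨t', b, rfl⟩
  · -- X ++ X is a suffix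
    obtain ⟨Y, c, rfl⟩ := X.eq_nil_or_concat.resolve_left hX
    simp only [append_nil] at hst
    -- s ++ (Y ++ [c]) ++ (Y ++ [c]) = v ++ [a]
    have h2 : (s ++ Y ++ c :: Y) ++ [c] = v ++ [a] := by
      rw [← hst]; simp
    obtain ⟨h3, h4⟩ := append_inj' h2 rfl
    have hc : c = a := by
      have := congrArg (fun l => l.head?) h4
      simpa using this
    subst hc
    exact ⟨s, Y, by rw [← h3]⟩
  · -- square inside v
    exfalso
    refine hv X hX ⟨s, t', ?_⟩
    have : (s ++ (X ++ X) ++ t') ++ [b] = v ++ [a] := by simpa using hst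
    have := append_inj_left' this (by simp)
    simpa using this

theorem no_YaY {w : List α} (hw : Steady w) {q Y r : List α} {a : α}
    (hdec : w = q ++ Y ++ a :: (Y ++ r)) (hY : Y ≠ []) : False := by
  have hlt : (q ++ Y).length < w.length := by
    subst hdec; simp
  have hsf := hw.2 _ hlt
  have : w.eraseIdx (q ++ Y).length = q ++ (Y ++ Y ++ r) := by
    subst hdec
    rw [show q ++ Y ++ a :: (Y ++ r) = (q ++ Y) ++ (a :: (Y ++ r)) by simp,
      eraseIdx_append_of_length_le (le_refl _)]
    simp
  exact hsf Y hY ⟨q, r, by rw [this]; simp⟩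


theorem key {w : List α} (hw : Steady w) {a : α} (hbad : ¬ Steady (w ++ [a])) :
    (∃ u, w = u ++ [a]) ∨ (∃ u x, w = u ++ [a, x]) ∨
    (∃ p Y₁ x Y₂, Y₁ ≠ [] ∧ w = p ++ Y₁ ++ x :: (Y₂ ++ a :: (Y₁ ++ Y₂))) ∨
    (∃ p Y₁ x Y₂, Y₂ ≠ [] ∧ w = p ++ (Y₁ ++ Y₂) ++ a :: (Y₁ ++ x :: Y₂)) := by
  rw [Steady] at hbad
  push_neg at hbad
  by_cases hsf : SquareFree (w ++ [a])
  case neg =>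
    obtain ⟨p, Y, hdec⟩ := sf_snoc hw.1 hsf
    rcases eq_or_ne Y [] with rfl | hY
    · exact Or.inl ⟨p, by simpa using hdec⟩
    · exact absurd (no_YaY hw (q := p) (Y := Y) (a := a) (r := []) (by rw [hdec]; simp) hY) not_false
  case pos =>
  obtain ⟨i, hi, hnsf⟩ := hbad hsf
  simp only [length_append, length_cons, length_nil] at hi
  rcases Nat.lt_or_ge i w.length with hin | hend
  swap
  · -- i = w.length : erased the new letter, word is w itself
    exfalso
    rw [eraseIdx_append_of_length_le hend] at hnsf
    rcases Nat.eq_or_lt_of_le hend with rfl | hgt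
    · simp at hnsf; exact hnsf hw.1
    · omega
  -- main case : i < w.length
  have he : (w ++ [a]).eraseIdx i = w.eraseIdx i ++ [a] := eraseIdx_append_of_lt_length hin _
  rw [he] at hnsf
  have hvsf : SquareFree (w.eraseIdx i) := hw.2 i hin
  obtain ⟨p, Y, hdec⟩ := sf_snoc hvsf hnsf
  have hlenv : (w.eraseIdx i).length = w.length - 1 := by
    rw [length_eraseIdx]; simp [hin]
  have hlen : w.length = p.length + (2 * Y.length + 2) := by
    have := congrArg List.length hdec
    simp at this; omega
  rcases le_or_gt i p.length with hip | hip
  · -- deletion before the pattern : Y a Y is a factor of w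
    have hsuf1 : (Y ++ a :: Y) <:+ w.eraseIdx i := ⟨p, by rw [hdec]; simp⟩
    have hsuf2 : w.drop (i+1) <:+ w.eraseIdx i :=
      ⟨w.take i, (eraseIdx_eq_take_drop_succ ..).symm⟩
    have hsuf3 : (Y ++ a :: Y) <:+ w.drop (i+1) := by
      apply suffix_of_suffix_length_le hsuf1 hsuf2
      simp only [length_drop, length_append, length_cons]
      omega
    obtain ⟨q, hq⟩ := hsuf3.trans (drop_suffix _ _)
    rcases eq_or_ne Y [] with rfl | hY
    · exact Or.inl ⟨q, by simpa using hq.symm⟩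
    · exact absurd (no_YaY hw (q := q) (Y := Y) (a := a) (r := []) (by rw [← hq]; simp) hY) not_false
  · -- deletion inside the final block S of length 2ℓ+2
    set n := w.length with hn
    set ℓ := Y.length with hℓ
    set k := i - p.length with hk
    have hk1 : 1 ≤ k := by omega
    have hk2 : k ≤ 2 * ℓ + 1 := by omega
    set S := w.drop p.length with hS
    have hSlen : S.length = 2 * ℓ + 2 := by simp [hS]; omega
    have hwPS : w = w.take p.length ++ S := (take_append_drop _ _).symm
    have hvPS : w.eraseIdx i = w.take p.length ++ S.eraseIdx k := by
      conv_lhs => rw [hwPS]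
      rw [eraseIdx_append_of_length_le (by simp; omega)]
      congr 2
      simp; omega
    have hPlen : (w.take p.length).length = p.length := by simp; omega
    have hPp : w.take p.length = p ∧ S.eraseIdx k = Y ++ a :: Y := by
      have h2 : w.take p.length ++ S.eraseIdx k = p ++ (Y ++ a :: Y) := by
        rw [← hvPS, hdec]; simp
      exact append_inj h2 (by rw [hPlen])
    have hkS : k < S.length := by omega
    set x := S[k]'hkS with hx
    set S₁ := S.take k with hS₁
    set S₂ := S.drop (k+1) with hS₂
    have hSsplit : S = S₁ ++ x :: S₂ := by
      rw [hS₁, hS₂, hx, ← drop_eq_getElem_cons, take_append_drop]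
    have hE : S₁ ++ S₂ = Y ++ a :: Y := by
      rw [hS₁, hS₂, ← eraseIdx_eq_take_drop_succ]; exact hPp.2
    have hS₁len : S₁.length = k := by simp [hS₁]; omega
    rcases le_or_gt k ℓ with hkℓ | hkℓ
    · -- case k ≤ ℓ : type B3
      have hT1 : S₁ = Y.take k := by
        have := congrArg (fun l => l.take k) hE
        simpa [take_append_of_le_length (by omega : k ≤ S₁.length),
          take_append_of_le_length (by omega : k ≤ Y.length), take_of_length_le (le_of_eq hS₁len)] using this
      have hT2 : S₂ = Y.drop k ++ a :: Y := by
        have := congrArg (fun l => l.drop k) hE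
        simpa [drop_append_of_le_length (by omega : k ≤ S₁.length),
          drop_append_of_le_length (by omega : k ≤ Y.length), drop_of_length_le (le_of_eq hS₁len)] using this
      refine Or.inr (Or.inr (Or.inl ⟨p, Y.take k, x, Y.drop k, ?_, ?_⟩))
      · have : (Y.take k).length = k := by simp; omega
        intro hcon; rw [hcon] at this; simp at this; omega
      · rw [hwPS, hPp.1, hSsplit, hT1, hT2]
        simp [take_append_drop]
    · -- case k ≥ ℓ+1
      have hT1 : S₁ = Y ++ a :: Y.take (k - ℓ - 1) := by
        have h5 := congrArg (fun l => l.take k) hE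
        rw [take_left' hS₁len] at h5
        rw [h5, take_append, take_of_length_le (by omega : Y.length ≤ k)]
        congr 1
        rw [show k - Y.length = (k - ℓ - 1) + 1 by omega, take_succ_cons]
        simp
      have hT2 : S₂ = Y.drop (k - ℓ - 1) := by
        have h5 := congrArg (fun l => l.drop k) hE
        rw [drop_left' hS₁len] at h5
        rw [h5, drop_append, drop_of_length_le (by omega : Y.length ≤ k)]
        simp only [nil_append]
        rw [show k - Y.length = (k - ℓ - 1) + 1 by omega, drop_succ_cons]
        simp
      set U := Y.take (k - ℓ - 1) with hU
      have hYsplit : Y = U ++ S₂ := by rw [hT2, hU]; exact (take_append_drop _ _).symm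
      rcases eq_or_ne S₂ [] with hS2nil | hS2ne
      · -- S₂ = [] : either B2 or contradiction
        have hUY : U = Y := by rw [hYsplit, hS2nil, append_nil]
        rcases eq_or_ne Y [] with hYnil | hYne
        · -- B2
          refine Or.inr (Or.inl ⟨p, x, ?_⟩)
          rw [hwPS, hPp.1, hSsplit, hT1, hS2nil, hU, hYnil]
          simp
        · exact absurd (no_YaY hw (q := p) (Y := Y) (a := a) (r := [x])
            (by rw [hwPS, hPp.1, hSsplit, hT1, hS2nil, hUY]; simp) hYne) not_false
      · -- B4
        refine Or.inr (Or.inr (Or.inr ⟨p, U, x, S₂, hS2ne, ?_⟩))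
        rw [hwPS, hPp.1, hSsplit, hT1]
        conv_lhs => rw [hYsplit]
        simp


open Classical in
noncomputable def Gn (A : ℕ → Finset α) : ℕ → Finset (List α)
  | 0 => {([] : List α)}
  | n+1 => ((Gn A n) ×ˢ (A n)).image (fun pr => pr.1 ++ [pr.2])

theorem mem_Gn {A : ℕ → Finset α} {n : ℕ} {w : List α} :
    w ∈ Gn A n ↔ w.length = n ∧ ∀ i (h : i < w.length), w[i] ∈ A i := by
  classical
  induction n generalizing w with
  | zero =>
    simp only [Gn, Finset.mem_singleton]
    constructor
    · rintro rfl; simp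
    · rintro ⟨h, -⟩; exact length_eq_zero_iff.mp h
  | succ n ih =>
    simp only [Gn, Finset.mem_image, Finset.mem_product, Prod.exists]
    constructor
    · rintro ⟨v, a, ⟨hv, ha⟩, rfl⟩
      obtain ⟨hvl, hvi⟩ := ih.mp hv
      refine ⟨by simp [hvl], ?_⟩
      intro i hi
      simp only [length_append, length_cons, length_nil, hvl] at hi
      rcases Nat.lt_or_ge i n with h1 | h1
      · rw [getElem_append_left (by omega)]
        exact hvi i (by omega)
      · have : i = n := by omega
        subst this
        rw [getElem_append_right (by omega)]
        simpa [hvl] using ha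
    · rintro ⟨hl, hi⟩
      have hne : w ≠ [] := by intro h; subst h; simp at hl
      refine ⟨w.dropLast, w.getLast hne, ⟨?_, ?_⟩, ?_⟩
      · apply ih.mpr
        constructor
        · simp [length_dropLast, hl]
        · intro j hj
          simp only [length_dropLast, hl] at hj
          rw [getElem_dropLast]
          exact hi j (by omega)
      · have h2 := hi (n) (by omega)
        have h3 : w.getLast hne = w[n]'(by omega) := by
          rw [getLast_eq_getElem]
          congr 1
          omega
        rwa [h3]
      · exact (dropLast_append_getLast hne)

open Classical in
noncomputable def Sn (A : ℕ → Finset α) (n : ℕ) : Finset (List α) :=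
  (Gn A n).filter (fun w => Steady w)

theorem mem_Sn {A : ℕ → Finset α} {n : ℕ} {w : List α} :
    w ∈ Sn A n ↔ w.length = n ∧ Steady w ∧ ∀ i (h : i < w.length), w[i] ∈ A i := by
  classical
  rw [Sn, Finset.mem_filter, mem_Gn]
  tauto


theorem take_mem_Sn {A : ℕ → Finset α} {n m : ℕ} {w : List α} (hw : w ∈ Sn A n) (hm : m ≤ n) :
    w.take m ∈ Sn A m := by
  rw [mem_Sn] at hw ⊢
  obtain ⟨hl, hs, hi⟩ := hw
  refine ⟨by simp [hl]; omega, steady_take hs m, ?_⟩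
  intro i h
  simp only [length_take] at h
  rw [getElem_take]
  exact hi i (by omega)

open Classical in
theorem step_le (A : ℕ → Finset α) (n : ℕ) :
    ∑ w ∈ Sn A n, ((A n).filter (fun a => Steady (w ++ [a]))).card ≤ (Sn A (n+1)).card := by
  classical
  have hsub : (Sn A n).biUnion
      (fun w => ((A n).filter (fun a => Steady (w ++ [a]))).image (fun a => w ++ [a]))
      ⊆ Sn A (n+1) := by
    intro W hW
    simp only [Finset.mem_biUnion, Finset.mem_image, Finset.mem_filter] at hW
    obtain ⟨w, hw, a, ⟨ha, hst⟩, rfl⟩ := hW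
    rw [mem_Sn] at hw ⊢
    obtain ⟨hl, hs, hi⟩ := hw
    refine ⟨by simp [hl], hst, ?_⟩
    intro i h
    simp only [length_append, hl, length_cons, length_nil] at h
    rcases Nat.lt_or_ge i n with h1 | h1
    · rw [getElem_append_left (by omega)]
      exact hi i (by omega)
    · have : i = n := by omega
      subst this
      rw [getElem_append_right (by omega)]
      simpa [hl] using ha
  have hdisj : ∀ w ∈ Sn A n, ∀ w' ∈ Sn A n, w ≠ w' →
      Disjoint (((A n).filter (fun a => Steady (w ++ [a]))).image (fun a => w ++ [a]))
        (((A n).filter (fun a => Steady (w' ++ [a]))).image (fun a => w' ++ [a])) := by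
    intro w hw w' hw' hne
    rw [Finset.disjoint_left]
    intro W h1 h2
    simp only [Finset.mem_image] at h1 h2
    obtain ⟨a, -, rfl⟩ := h1
    obtain ⟨a', -, heq⟩ := h2
    have hlw : w.length = n := (mem_Sn.mp hw).1
    have hlw' : w'.length = n := (mem_Sn.mp hw').1
    have h9 := (append_inj heq (by rw [hlw, hlw'])).1
    exact hne h9.symm
  calc ∑ w ∈ Sn A n, ((A n).filter (fun a => Steady (w ++ [a]))).card
      = ∑ w ∈ Sn A n, (((A n).filter (fun a => Steady (w ++ [a]))).image (fun a => w ++ [a])).card := by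
        apply Finset.sum_congr rfl
        intro w _
        rw [Finset.card_image_of_injective _ (fun a b h => by
          have := append_cancel_left h
          simpa using this)]
    _ = ((Sn A n).biUnion _).card := (Finset.card_biUnion hdisj).symm
    _ ≤ (Sn A (n+1)).card := Finset.card_le_card hsub

theorem getD_mid (u v : List α) (c d : α) : (u ++ c :: v).getD u.length d = c := by
  rw [List.getD_append_right _ _ _ _ (le_refl _)]
  simp

def P1 (w : List α) (ℓ : ℕ) : Prop :=
  ∃ p Y₁ Y₂ : List α, ∃ x c : α, Y₁ ≠ [] ∧ Y₁.length + Y₂.length = ℓ ∧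
    w = p ++ Y₁ ++ x :: (Y₂ ++ c :: (Y₁ ++ Y₂))

def P2 (w : List α) (ℓ : ℕ) : Prop :=
  ∃ p Y₁ Y₂ : List α, ∃ x c : α, Y₂ ≠ [] ∧ Y₁.length + Y₂.length = ℓ ∧
    w = p ++ (Y₁ ++ Y₂) ++ c :: (Y₁ ++ x :: Y₂)

open Classical in
noncomputable def badF (w₀ : α) (w : List α) : Finset α :=
  ({w.getD (w.length - 1) w₀, w.getD (w.length - 2) w₀} : Finset α)
  ∪ ((Finset.range w.length).filter (fun ℓ => P1 w ℓ)).image (fun ℓ => w.getD (w.length - ℓ - 1) w₀)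
  ∪ ((Finset.range w.length).filter (fun ℓ => P2 w ℓ)).image (fun ℓ => w.getD (w.length - ℓ - 2) w₀)

open Classical in
theorem card_badF (w₀ : α) (w : List α) :
    (badF w₀ w).card ≤ 2 + ((Finset.range w.length).filter (fun ℓ => P1 w ℓ)).card
      + ((Finset.range w.length).filter (fun ℓ => P2 w ℓ)).card := by
  classical
  refine le_trans (Finset.card_union_le _ _) ?_
  have h1 := Finset.card_union_le ({w.getD (w.length - 1) w₀, w.getD (w.length - 2) w₀} : Finset α)
    (((Finset.range w.length).filter (fun ℓ => P1 w ℓ)).image (fun ℓ => w.getD (w.length - ℓ - 1) w₀))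
  have h2 : ({w.getD (w.length - 1) w₀, w.getD (w.length - 2) w₀} : Finset α).card ≤ 2 :=
    Finset.card_insert_le _ _ |>.trans (by simp)
  have h3 := Finset.card_image_le (s := (Finset.range w.length).filter (fun ℓ => P1 w ℓ))
    (f := fun ℓ => w.getD (w.length - ℓ - 1) w₀)
  have h4 := Finset.card_image_le (s := (Finset.range w.length).filter (fun ℓ => P2 w ℓ))
    (f := fun ℓ => w.getD (w.length - ℓ - 2) w₀)
  omega

open Classical in
theorem bad_mem {w : List α} (hw : Steady w) {a : α} (hbad : ¬ Steady (w ++ [a])) (w₀ : α) :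
    a ∈ badF w₀ w := by
  classical
  rw [badF]
  rcases key hw hbad with ⟨u, rfl⟩ | ⟨u, x, rfl⟩ | ⟨p, Y₁, x, Y₂, hY, hdec⟩ | ⟨p, Y₁, x, Y₂, hY, hdec⟩
  · apply Finset.mem_union_left
    apply Finset.mem_union_left
    apply Finset.mem_insert.mpr
    left
    have : (u ++ [a]).length - 1 = u.length := by simp
    rw [this, getD_mid]
  · apply Finset.mem_union_left
    apply Finset.mem_union_left
    apply Finset.mem_insert.mpr
    right
    apply Finset.mem_singleton.mpr
    have : (u ++ [a, x]).length - 2 = u.length := by simp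
    rw [this]
    exact (getD_mid u [x] a w₀).symm
  · -- B3
    apply Finset.mem_union_left
    apply Finset.mem_union_right
    set ℓ := Y₁.length + Y₂.length with hℓ
    have hdec' : w = (p ++ Y₁ ++ x :: Y₂) ++ a :: (Y₁ ++ Y₂) := by rw [hdec]; simp
    have hlen : w.length = p.length + 2 * ℓ + 2 := by
      rw [hdec']; simp only [length_append, length_cons]; omega
    refine Finset.mem_image.mpr ⟨ℓ, Finset.mem_filter.mpr ⟨Finset.mem_range.mpr (by omega), ?_⟩, ?_⟩
    · exact ⟨p, Y₁, Y₂, x, a, hY, rfl, hdec⟩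
    · have h2 : w.length - ℓ - 1 = (p ++ Y₁ ++ x :: Y₂).length := by
        simp only [length_append, length_cons]
        omega
      rw [h2, hdec', getD_mid]
  · -- B4
    apply Finset.mem_union_right
    set ℓ := Y₁.length + Y₂.length with hℓ
    have hdec' : w = (p ++ (Y₁ ++ Y₂)) ++ a :: (Y₁ ++ x :: Y₂) := hdec
    have hlen : w.length = p.length + 2 * ℓ + 2 := by
      rw [hdec']; simp only [length_append, length_cons]; omega
    refine Finset.mem_image.mpr ⟨ℓ, Finset.mem_filter.mpr ⟨Finset.mem_range.mpr (by omega), ?_⟩, ?_⟩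
    · exact ⟨p, Y₁, Y₂, x, a, hY, rfl, hdec⟩
    · have h2 : w.length - ℓ - 2 = (p ++ (Y₁ ++ Y₂)).length := by
        simp only [length_append]
        omega
      rw [h2, hdec', getD_mid]

open Classical in
theorem good_card {A : ℕ → Finset α} (hA : ∀ i, (A i).card = 7) {n : ℕ} {w : List α}
    (hw : w ∈ Sn A n) (w₀ : α) :
    7 ≤ ((A n).filter (fun a => Steady (w ++ [a]))).card + (badF w₀ w).card := by
  classical
  have hcov : (A n) ⊆ ((A n).filter (fun a => Steady (w ++ [a]))) ∪ badF w₀ w := by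
    intro a ha
    by_cases h : Steady (w ++ [a])
    · exact Finset.mem_union_left _ (Finset.mem_filter.mpr ⟨ha, h⟩)
    · exact Finset.mem_union_right _ (bad_mem (mem_Sn.mp hw).2.1 h w₀)
  calc (7 : ℕ) = (A n).card := (hA n).symm
    _ ≤ (((A n).filter (fun a => Steady (w ++ [a]))) ∪ badF w₀ w).card := Finset.card_le_card hcov
    _ ≤ _ := Finset.card_union_le _ _


def P1j (w : List α) (ℓ j : ℕ) : Prop :=
  ∃ p Y₁ Y₂ : List α, ∃ x c : α, Y₁.length = j ∧ Y₁ ≠ [] ∧ Y₁.length + Y₂.length = ℓ ∧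
    w = p ++ Y₁ ++ x :: (Y₂ ++ c :: (Y₁ ++ Y₂))

def P2j (w : List α) (ℓ j : ℕ) : Prop :=
  ∃ p Y₁ Y₂ : List α, ∃ x c : α, Y₁.length = j ∧ Y₂ ≠ [] ∧ Y₁.length + Y₂.length = ℓ ∧
    w = p ++ (Y₁ ++ Y₂) ++ c :: (Y₁ ++ x :: Y₂)

theorem getD_mem {A : ℕ → Finset α} {n : ℕ} {w : List α} (hw : w ∈ Sn A n) {i : ℕ}
    (hi : i < n) (w₀ : α) : w.getD i w₀ ∈ A i := by
  obtain ⟨hl, -, hmem⟩ := mem_Sn.mp hw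
  rw [List.getD_eq_getElem _ _ (by omega)]
  exact hmem i (by omega)

theorem recon1 {w : List α} {n ℓ j : ℕ} (hw : P1j w ℓ j) (hn : w.length = n) :
    w = w.take (n-ℓ) ++ ((w.take (n-ℓ)).dropLast.drop ((n-ℓ) - (ℓ+2))).eraseIdx j := by
  obtain ⟨p, Y₁, Y₂, x, c, hj, hY, hℓ, hdec⟩ := hw
  have hw' : w = (p ++ Y₁ ++ x :: (Y₂ ++ [c])) ++ (Y₁ ++ Y₂) := by rw [hdec]; simp
  have hnval : n = p.length + 2*ℓ + 2 := by
    rw [← hn, hdec]; simp only [length_append, length_cons]; omega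
  have hlen : (p ++ Y₁ ++ x :: (Y₂ ++ [c])).length = n - ℓ := by
    simp only [length_append, length_cons, length_nil]; omega
  have htake : w.take (n-ℓ) = p ++ Y₁ ++ x :: (Y₂ ++ [c]) := by
    rw [hw', take_left' hlen]
  rw [htake]
  have hdl : (p ++ Y₁ ++ x :: (Y₂ ++ [c])).dropLast = p ++ (Y₁ ++ x :: Y₂) := by
    rw [show p ++ Y₁ ++ x :: (Y₂ ++ [c]) = (p ++ (Y₁ ++ x :: Y₂)) ++ [c] by simp,
      dropLast_concat]
  rw [hdl]
  have hdr : (p ++ (Y₁ ++ x :: Y₂)).drop ((n-ℓ) - (ℓ+2)) = Y₁ ++ x :: Y₂ := by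
    apply drop_left'
    omega
  rw [hdr]
  have her : (Y₁ ++ x :: Y₂).eraseIdx j = Y₁ ++ Y₂ := by
    rw [eraseIdx_append_of_length_le (by omega)]
    simp [show j - Y₁.length = 0 by omega]
  rw [her, hw']

theorem recon2a {w : List α} {n ℓ : ℕ} (hw : P2j w ℓ 0) (hn : w.length = n) :
    w = w.take (n-ℓ) ++ ((w.take (n-ℓ)).dropLast.dropLast.drop ((n-ℓ) - (ℓ+2))) := by
  obtain ⟨p, Y₁, Y₂, x, c, hj, hY, hℓ, hdec⟩ := hw
  have hY₁ : Y₁ = [] := length_eq_zero_iff.mp hj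
  subst hY₁
  simp only [nil_append] at hdec
  have hw' : w = (p ++ Y₂ ++ [c, x]) ++ Y₂ := by rw [hdec]; simp
  have hnval : n = p.length + 2*ℓ + 2 := by
    rw [← hn, hdec]; simp only [length_append, length_cons]; omega
  have hlen : (p ++ Y₂ ++ [c, x]).length = n - ℓ := by
    simp only [length_append, length_cons, length_nil]; omega
  have htake : w.take (n-ℓ) = p ++ Y₂ ++ [c, x] := by rw [hw', take_left' hlen]
  rw [htake]
  have hdl : (p ++ Y₂ ++ [c, x]).dropLast.dropLast = p ++ Y₂ := by
    rw [show p ++ Y₂ ++ [c, x] = ((p ++ Y₂) ++ [c]) ++ [x] by simp, dropLast_concat,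
      dropLast_concat]
  rw [hdl]
  have hdr : (p ++ Y₂).drop ((n-ℓ) - (ℓ+2)) = Y₂ := by
    apply drop_left'; omega
  rw [hdr, hw']

theorem recon2b {w : List α} {n ℓ j : ℕ} (hw : P2j w ℓ j) (hj : j ≠ 0) (hn : w.length = n)
    (w₀ : α) :
    w = w.take (n-ℓ-1) ++ ((w.take (n-ℓ-1)).dropLast.drop ((n-ℓ-1) - (ℓ+1))).take j
      ++ (w.getD (n-ℓ-1+j) w₀) :: ((w.take (n-ℓ-1)).dropLast.drop ((n-ℓ-1) - (ℓ+1))).drop j := by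
  obtain ⟨p, Y₁, Y₂, x, c, hjv, hY, hℓ, hdec⟩ := hw
  have hnval : n = p.length + 2*ℓ + 2 := by
    rw [← hn, hdec]; simp only [length_append, length_cons]; omega
  have hY₂ : Y₂.length ≠ 0 := by
    intro h; exact hY (length_eq_zero_iff.mp h)
  have hw' : w = (p ++ (Y₁ ++ Y₂) ++ [c]) ++ (Y₁ ++ x :: Y₂) := by rw [hdec]; simp
  have hlen : (p ++ (Y₁ ++ Y₂) ++ [c]).length = n - ℓ - 1 := by
    simp only [length_append, length_cons, length_nil]; omega
  have htake : w.take (n-ℓ-1) = p ++ (Y₁ ++ Y₂) ++ [c] := by rw [hw', take_left' hlen]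
  rw [htake]
  have hdl : (p ++ (Y₁ ++ Y₂) ++ [c]).dropLast = p ++ (Y₁ ++ Y₂) := by
    rw [show p ++ (Y₁ ++ Y₂) ++ [c] = (p ++ (Y₁ ++ Y₂)) ++ [c] by simp, dropLast_concat]
  rw [hdl]
  have hdr : (p ++ (Y₁ ++ Y₂)).drop ((n-ℓ-1) - (ℓ+1)) = Y₁ ++ Y₂ := by
    apply drop_left'; omega
  rw [hdr]
  have ht1 : (Y₁ ++ Y₂).take j = Y₁ := take_left' (by omega)
  have ht2 : (Y₁ ++ Y₂).drop j = Y₂ := drop_left' (by omega)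
  rw [ht1, ht2]
  have hx : w.getD (n-ℓ-1+j) w₀ = x := by
    have h2 : w = (p ++ (Y₁ ++ Y₂) ++ c :: Y₁) ++ x :: Y₂ := by rw [hdec]; simp
    have h3 : (p ++ (Y₁ ++ Y₂) ++ c :: Y₁).length = n-ℓ-1+j := by
      simp only [length_append, length_cons]; omega
    rw [show n-ℓ-1+j = (p ++ (Y₁ ++ Y₂) ++ c :: Y₁).length from h3.symm, h2, getD_mid]
  rw [hx, hw']
  simp

open Classical in
theorem bound1 (A : ℕ → Finset α) (n ℓ j : ℕ) (hj : j ≠ 0) :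
    ((Sn A n).filter (fun w => P1j w ℓ j)).card ≤ (Sn A (n-ℓ)).card := by
  classical
  apply Finset.card_le_card_of_injOn (fun w => w.take (n-ℓ))
  · intro w hw
    rw [Finset.mem_coe, Finset.mem_filter] at hw
    exact take_mem_Sn hw.1 (by omega)
  · intro w hw w' hw' heq
    rw [Finset.mem_coe, Finset.mem_filter] at hw hw'
    have h1 := recon1 hw.2 (mem_Sn.mp hw.1).1
    have h2 := recon1 hw'.2 (mem_Sn.mp hw'.1).1
    have heq' : w.take (n-ℓ) = w'.take (n-ℓ) := heq
    rw [h1, h2, heq']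

open Classical in
theorem bound1z (A : ℕ → Finset α) (n ℓ : ℕ) :
    ((Sn A n).filter (fun w => P1j w ℓ 0)).card = 0 := by
  classical
  rw [Finset.card_eq_zero, Finset.filter_eq_empty_iff]
  rintro w - ⟨p, Y₁, Y₂, x, c, hj, hY, -⟩
  exact hY (length_eq_zero_iff.mp hj)

open Classical in
theorem bound2a (A : ℕ → Finset α) (n ℓ : ℕ) :
    ((Sn A n).filter (fun w => P2j w ℓ 0)).card ≤ (Sn A (n-ℓ)).card := by
  classical
  apply Finset.card_le_card_of_injOn (fun w => w.take (n-ℓ))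
  · intro w hw
    rw [Finset.mem_coe, Finset.mem_filter] at hw
    exact take_mem_Sn hw.1 (by omega)
  · intro w hw w' hw' heq
    rw [Finset.mem_coe, Finset.mem_filter] at hw hw'
    have h1 := recon2a hw.2 (mem_Sn.mp hw.1).1
    have h2 := recon2a hw'.2 (mem_Sn.mp hw'.1).1
    have heq' : w.take (n-ℓ) = w'.take (n-ℓ) := heq
    rw [h1, h2, heq']

open Classical in
theorem bound2b (A : ℕ → Finset α) (hA : ∀ i, (A i).card = 7) (n ℓ j : ℕ) (hj : j ≠ 0)
    (w₀ : α) :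
    ((Sn A n).filter (fun w => P2j w ℓ j)).card ≤ 7 * (Sn A (n-ℓ-1)).card := by
  classical
  have hb : ((Sn A n).filter (fun w => P2j w ℓ j)).card ≤
      ((Sn A (n-ℓ-1)) ×ˢ (A (n-ℓ-1+j))).card := by
    apply Finset.card_le_card_of_injOn (fun w => (w.take (n-ℓ-1), w.getD (n-ℓ-1+j) w₀))
    · intro w hw
      rw [Finset.mem_coe, Finset.mem_filter] at hw
      have hidx : n-ℓ-1+j < n := by
        obtain ⟨p, Y₁, Y₂, x, c, hjv, hY, hℓv, hdec⟩ := hw.2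
        have : w.length = n := (mem_Sn.mp hw.1).1
        have hnval : n = p.length + 2*ℓ + 2 := by
          rw [← this, hdec]; simp only [length_append, length_cons]; omega
        have hY₂ : Y₂.length ≠ 0 := fun h => hY (length_eq_zero_iff.mp h)
        omega
      exact Finset.mem_product.mpr ⟨take_mem_Sn hw.1 (by omega), getD_mem hw.1 hidx w₀⟩
    · intro w hw w' hw' heq
      rw [Finset.mem_coe, Finset.mem_filter] at hw hw'
      have h1 := recon2b hw.2 hj (mem_Sn.mp hw.1).1 w₀
      have h2 := recon2b hw'.2 hj (mem_Sn.mp hw'.1).1 w₀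
      have e1 : w.take (n-ℓ-1) = w'.take (n-ℓ-1) := congrArg Prod.fst heq
      have e2 : w.getD (n-ℓ-1+j) w₀ = w'.getD (n-ℓ-1+j) w₀ := congrArg Prod.snd heq
      rw [h1, h2, e1, e2]
  rw [Finset.card_product, hA] at hb
  omega


theorem steady_nil : Steady ([] : List α) :=
  ⟨sf_nil, by intro i hi; simp at hi⟩

open Classical in
theorem card_Sn_zero (A : ℕ → Finset α) : (Sn A 0).card = 1 := by
  classical
  have h : Sn A 0 = {([] : List α)} := by
    ext w
    rw [mem_Sn, Finset.mem_singleton]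
    constructor
    · rintro ⟨h, -, -⟩
      exact length_eq_zero_iff.mp h
    · rintro rfl
      exact ⟨rfl, steady_nil, by intro i hi; simp at hi⟩
  rw [h, Finset.card_singleton]

theorem num_sum : ∀ L : ℕ,
    (∑ ℓ ∈ Finset.range (L+1), (99*ℓ - 27) * 4^(L-ℓ)) + 33*L + 35 ≤ 35 * 4^L := by
  intro L
  induction L with
  | zero => simp
  | succ L ih =>
    have hshift : (∑ ℓ ∈ Finset.range (L+2), (99*ℓ - 27) * 4^(L+1-ℓ))
        = 4 * (∑ ℓ ∈ Finset.range (L+1), (99*ℓ - 27) * 4^(L-ℓ)) + (99*(L+1) - 27) := by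
      rw [Finset.sum_range_succ]
      congr 1
      · rw [Finset.mul_sum]
        apply Finset.sum_congr rfl
        intro ℓ hl
        rw [Finset.mem_range] at hl
        rw [show L+1-ℓ = (L-ℓ)+1 by omega, pow_succ]
        ring
      · simp
    rw [hshift]
    have h4 : (35:ℕ) * 4^(L+1) = 4 * (35 * 4^L) := by rw [pow_succ]; ring
    omega

theorem num_sum2 (n : ℕ) : (∑ ℓ ∈ Finset.range n, (99*ℓ - 27) * 4^(n-ℓ)) ≤ 35 * 4^n := by
  cases n with
  | zero => simp
  | succ L =>
    have h4 : ∀ ℓ ∈ Finset.range (L+1), (99*ℓ - 27)*4^(L+1-ℓ) = 4*((99*ℓ - 27)*4^(L-ℓ)) := by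
      intro ℓ hℓ
      rw [Finset.mem_range] at hℓ
      rw [show L+1-ℓ = (L-ℓ)+1 by omega, pow_succ]
      ring
    rw [Finset.sum_congr rfl h4, ← Finset.mul_sum]
    have h5 := num_sum L
    have h6 : (35:ℕ) * 4^(L+1) = 4 * (35 * 4^L) := by rw [pow_succ]; ring
    omega

theorem numeric_main {C : ℕ → ℕ} {n : ℕ} (chain : ∀ k, k ≤ n → 4^k * C (n-k) ≤ C n) :
    (∑ ℓ ∈ Finset.range n,
      (ℓ * C (n-ℓ) + (if ℓ = 0 then 0 else C (n-ℓ) + (ℓ-1) * (7 * C (n-ℓ-1))))) ≤ C n := by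
  have per : ∀ ℓ ∈ Finset.range n,
      36 * 4^n * (ℓ * C (n-ℓ) + (if ℓ = 0 then 0 else C (n-ℓ) + (ℓ-1) * (7 * C (n-ℓ-1))))
        ≤ ((99*ℓ - 27) * 4^(n-ℓ)) * C n := by
    intro ℓ hℓ
    rw [Finset.mem_range] at hℓ
    match ℓ with
    | 0 => simp
    | (m+1) =>
      have h1 : 4^(m+1) * C (n-(m+1)) ≤ C n := chain (m+1) (by omega)
      have h2 : 4^(m+2) * C (n-(m+1)-1) ≤ C n := by
        have h := chain (m+2) (by omega)
        rwa [show n-(m+2) = n-(m+1)-1 by omega] at h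
      have hsplit : (4:ℕ)^n = 4^(n-(m+1)) * 4^(m+1) := by
        rw [← pow_add]
        congr 1
        omega
      simp only [if_neg (Nat.succ_ne_zero m)]
      rw [show 99*(m+1) - 27 = 99*m + 72 by omega]
      calc 36 * 4^n * ((m+1) * C (n-(m+1)) + (C (n-(m+1)) + ((m+1)-1) * (7 * C (n-(m+1)-1))))
          = (36*(m+2)) * 4^(n-(m+1)) * (4^(m+1) * C (n-(m+1)))
            + (63*m) * 4^(n-(m+1)) * (4^(m+2) * C (n-(m+1)-1)) := by
            rw [hsplit, show (m+1)-1 = m by omega]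
            ring
        _ ≤ (36*(m+2)) * 4^(n-(m+1)) * C n + (63*m) * 4^(n-(m+1)) * C n := by
            exact add_le_add (Nat.mul_le_mul_left _ h1) (Nat.mul_le_mul_left _ h2)
        _ = (99*m + 72) * 4^(n-(m+1)) * C n := by ring
  have hmul : 36 * 4^n * (∑ ℓ ∈ Finset.range n,
      (ℓ * C (n-ℓ) + (if ℓ = 0 then 0 else C (n-ℓ) + (ℓ-1) * (7 * C (n-ℓ-1)))))
      ≤ (36 * 4^n) * C n := by
    calc 36 * 4^n * _ = ∑ ℓ ∈ Finset.range n, 36 * 4^n *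
          (ℓ * C (n-ℓ) + (if ℓ = 0 then 0 else C (n-ℓ) + (ℓ-1) * (7 * C (n-ℓ-1)))) :=
        Finset.mul_sum _ _ _
      _ ≤ ∑ ℓ ∈ Finset.range n, ((99*ℓ - 27) * 4^(n-ℓ)) * C n := Finset.sum_le_sum per
      _ = (∑ ℓ ∈ Finset.range n, (99*ℓ - 27) * 4^(n-ℓ)) * C n := by rw [Finset.sum_mul]
      _ ≤ (35 * 4^n) * C n := Nat.mul_le_mul_right _ (num_sum2 n)
      _ ≤ (36 * 4^n) * C n := Nat.mul_le_mul_right _ (by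
          have : (4:ℕ)^n ≥ 1 := Nat.one_le_pow _ _ (by norm_num)
          nlinarith)
  exact Nat.le_of_mul_le_mul_left hmul (by positivity)

open Classical in
theorem N1_le (A : ℕ → Finset α) (n ℓ : ℕ) :
    ((Sn A n).filter (fun w => P1 w ℓ)).card ≤ ℓ * (Sn A (n-ℓ)).card := by
  classical
  have hsub : (Sn A n).filter (fun w => P1 w ℓ) ⊆
      (Finset.range (ℓ+1)).biUnion (fun j => (Sn A n).filter (fun w => P1j w ℓ j)) := by
    intro w hw
    rw [Finset.mem_filter] at hw
    obtain ⟨p, Y₁, Y₂, x, c, hY, hℓ, hdec⟩ := hw.2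
    exact Finset.mem_biUnion.mpr ⟨Y₁.length, Finset.mem_range.mpr (by omega),
      Finset.mem_filter.mpr ⟨hw.1, ⟨p, Y₁, Y₂, x, c, rfl, hY, hℓ, hdec⟩⟩⟩
  calc ((Sn A n).filter (fun w => P1 w ℓ)).card
      ≤ ((Finset.range (ℓ+1)).biUnion (fun j => (Sn A n).filter (fun w => P1j w ℓ j))).card :=
        Finset.card_le_card hsub
    _ ≤ ∑ j ∈ Finset.range (ℓ+1), ((Sn A n).filter (fun w => P1j w ℓ j)).card :=
        Finset.card_biUnion_le
    _ ≤ ∑ j ∈ Finset.range (ℓ+1), (if j = 0 then 0 else (Sn A (n-ℓ)).card) := by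
        apply Finset.sum_le_sum
        intro j _
        rcases eq_or_ne j 0 with rfl | hj
        · rw [if_pos rfl]
          exact le_of_eq (bound1z A n ℓ)
        · rw [if_neg hj]
          exact bound1 A n ℓ j hj
    _ = ℓ * (Sn A (n-ℓ)).card := by
        rw [Finset.sum_range_succ']
        simp [Finset.sum_const]
        try ring

open Classical in
theorem N2_le (A : ℕ → Finset α) (hA : ∀ i, (A i).card = 7) (n ℓ : ℕ) (w₀ : α) :
    ((Sn A n).filter (fun w => P2 w ℓ)).card ≤
      (if ℓ = 0 then 0 else (Sn A (n-ℓ)).card + (ℓ-1) * (7 * (Sn A (n-ℓ-1)).card)) := by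
  classical
  have hsub : (Sn A n).filter (fun w => P2 w ℓ) ⊆
      (Finset.range ℓ).biUnion (fun j => (Sn A n).filter (fun w => P2j w ℓ j)) := by
    intro w hw
    rw [Finset.mem_filter] at hw
    obtain ⟨p, Y₁, Y₂, x, c, hY, hℓ, hdec⟩ := hw.2
    have hY₂ : Y₂.length ≠ 0 := fun h => hY (length_eq_zero_iff.mp h)
    exact Finset.mem_biUnion.mpr ⟨Y₁.length, Finset.mem_range.mpr (by omega),
      Finset.mem_filter.mpr ⟨hw.1, ⟨p, Y₁, Y₂, x, c, rfl, hY, hℓ, hdec⟩⟩⟩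
  match ℓ with
  | 0 =>
    rw [if_pos rfl]
    have h0 : (Sn A n).filter (fun w => P2 w 0) ⊆ (∅ : Finset (List α)) := by
      simpa using hsub
    simpa using Finset.card_le_card h0
  | (m+1) =>
    rw [if_neg (Nat.succ_ne_zero m)]
    calc ((Sn A n).filter (fun w => P2 w (m+1))).card
        ≤ ((Finset.range (m+1)).biUnion (fun j => (Sn A n).filter (fun w => P2j w (m+1) j))).card :=
          Finset.card_le_card hsub
      _ ≤ ∑ j ∈ Finset.range (m+1), ((Sn A n).filter (fun w => P2j w (m+1) j)).card :=
          Finset.card_biUnion_le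
      _ ≤ ∑ j ∈ Finset.range (m+1),
            (if j = 0 then (Sn A (n-(m+1))).card else 7 * (Sn A (n-(m+1)-1)).card) := by
          apply Finset.sum_le_sum
          intro j _
          rcases eq_or_ne j 0 with rfl | hj
          · rw [if_pos rfl]
            exact bound2a A n (m+1)
          · rw [if_neg hj]
            exact bound2b A hA n (m+1) j hj w₀
      _ = (Sn A (n-(m+1))).card + ((m+1)-1) * (7 * (Sn A (n-(m+1)-1)).card) := by
          rw [Finset.sum_range_succ']
          simp [Finset.sum_const]
          try ring

open Classical in
theorem swap1 (A : ℕ → Finset α) (n : ℕ) (P : List α → ℕ → Prop) :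
    ∑ w ∈ Sn A n, ((Finset.range n).filter (fun ℓ => P w ℓ)).card
      = ∑ ℓ ∈ Finset.range n, ((Sn A n).filter (fun w => P w ℓ)).card := by
  classical
  simp only [Finset.card_filter]
  rw [Finset.sum_comm]

open Classical in
theorem ratio (A : ℕ → Finset α) (hA : ∀ i, (A i).card = 7) :
    ∀ n : ℕ, 4 * (Sn A n).card ≤ (Sn A (n+1)).card := by
  intro n
  induction n using Nat.strong_induction_on with
  | _ n IH =>
  classical
  obtain ⟨w₀, -⟩ := Finset.card_pos.mp (show 0 < (A 0).card by rw [hA 0]; norm_num)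
  have chain : ∀ k, k ≤ n → 4^k * (Sn A (n-k)).card ≤ (Sn A n).card := by
    intro k
    induction k with
    | zero => intro _; simp
    | succ k ihk =>
      intro hk
      have h1 : 4 * (Sn A (n-k-1)).card ≤ (Sn A (n-k)).card := by
        have h := IH (n-k-1) (by omega)
        rwa [show n-k-1+1 = n-k by omega] at h
      calc 4^(k+1) * (Sn A (n-(k+1))).card
          = 4^k * (4 * (Sn A (n-k-1)).card) := by
            rw [show n-(k+1) = n-k-1 by omega, pow_succ]
            ring
        _ ≤ 4^k * (Sn A (n-k)).card := Nat.mul_le_mul_left _ h1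
        _ ≤ (Sn A n).card := ihk (by omega)
  have hsum7 : 7 * (Sn A n).card ≤
      (∑ w ∈ Sn A n, ((A n).filter (fun a => Steady (w ++ [a]))).card)
      + (∑ w ∈ Sn A n, (badF w₀ w).card) := by
    rw [← Finset.sum_add_distrib]
    calc 7 * (Sn A n).card = ∑ _w ∈ Sn A n, 7 := by
          rw [Finset.sum_const, smul_eq_mul, mul_comm]
      _ ≤ _ := Finset.sum_le_sum (fun w hw => good_card hA hw w₀)
  have hstep := step_le A n
  have hbadsum : (∑ w ∈ Sn A n, (badF w₀ w).card) ≤ 2 * (Sn A n).card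
      + ((∑ ℓ ∈ Finset.range n, ((Sn A n).filter (fun w => P1 w ℓ)).card)
      + (∑ ℓ ∈ Finset.range n, ((Sn A n).filter (fun w => P2 w ℓ)).card)) := by
    have h1 : ∀ w ∈ Sn A n, (badF w₀ w).card ≤
        2 + (((Finset.range n).filter (fun ℓ => P1 w ℓ)).card
          + ((Finset.range n).filter (fun ℓ => P2 w ℓ)).card) := by
      intro w hw
      have hl : w.length = n := (mem_Sn.mp hw).1
      have h := card_badF w₀ w
      rw [hl] at h
      omega
    calc (∑ w ∈ Sn A n, (badF w₀ w).card)
        ≤ ∑ w ∈ Sn A n, (2 + (((Finset.range n).filter (fun ℓ => P1 w ℓ)).card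
            + ((Finset.range n).filter (fun ℓ => P2 w ℓ)).card)) := Finset.sum_le_sum h1
      _ = 2 * (Sn A n).card
          + ((∑ ℓ ∈ Finset.range n, ((Sn A n).filter (fun w => P1 w ℓ)).card)
          + (∑ ℓ ∈ Finset.range n, ((Sn A n).filter (fun w => P2 w ℓ)).card)) := by
          rw [Finset.sum_add_distrib, Finset.sum_add_distrib, Finset.sum_const,
            swap1 A n (fun w ℓ => P1 w ℓ), swap1 A n (fun w ℓ => P2 w ℓ),
            smul_eq_mul, mul_comm]
  have hT : (∑ ℓ ∈ Finset.range n, ((Sn A n).filter (fun w => P1 w ℓ)).card)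
      + (∑ ℓ ∈ Finset.range n, ((Sn A n).filter (fun w => P2 w ℓ)).card)
      ≤ (Sn A n).card := by
    have h1 : (∑ ℓ ∈ Finset.range n, ((Sn A n).filter (fun w => P1 w ℓ)).card)
        + (∑ ℓ ∈ Finset.range n, ((Sn A n).filter (fun w => P2 w ℓ)).card)
        ≤ ∑ ℓ ∈ Finset.range n, (ℓ * (Sn A (n-ℓ)).card
          + (if ℓ = 0 then 0 else (Sn A (n-ℓ)).card + (ℓ-1) * (7 * (Sn A (n-ℓ-1)).card))) := by
      rw [← Finset.sum_add_distrib]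
      apply Finset.sum_le_sum
      intro ℓ _
      exact add_le_add (N1_le A n ℓ) (N2_le A hA n ℓ w₀)
    exact h1.trans (numeric_main (C := fun m => (Sn A m).card) chain)
  omega


end StmtAux

/-- Given alphabets `A 0, A 1, …`, each of size 7, for every `N` there are at least
`4 ^ N` steady words of length `N` whose `i`-th letter belongs to `A i`. -/
theorem stmt16 {α : Type*} (A : ℕ → Finset α) (hA : ∀ i, (A i).card = 7) (N : ℕ) :
    4 ^ N ≤ {W : List α | W.length = N ∧ Steady W ∧
      ∀ i, (h : i < W.length) → W[i] ∈ A i}.ncard := by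
  classical
  have hset : {W : List α | W.length = N ∧ Steady W ∧
      ∀ i, (h : i < W.length) → W[i] ∈ A i} = ↑(StmtAux.Sn A N) := by
    ext w
    simp only [Set.mem_setOf_eq, Finset.mem_coe, StmtAux.mem_Sn]
  rw [hset, Set.ncard_coe_finset]
  clear hset
  induction N with
  | zero =>
    rw [StmtAux.card_Sn_zero]
    norm_num
  | succ N ih =>
    calc 4^(N+1) = 4 * 4^N := by ring
      _ ≤ 4 * (StmtAux.Sn A N).card := Nat.mul_le_mul_left 4 ih
      _ ≤ (StmtAux.Sn A (N+1)).card := StmtAux.ratio A hA N
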